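/- Let ρ ⊂ ℝ² be a polygon with rational vertices and S a side of ρ. Then there exist A ∈ SL(2,ℤ), integers m, n, and a positive integer p such that the set D = A·(p·ρ) + (m,n) satisfies: D ⊆ {(x,y) : x ≤ 0}, and D ∩ {(x,y) : x = 0} equals the side A·(p·S) + (m,n) of the polygon D. -/

import Mathlib

open Filter Topology

/-- The linear action of a matrix `A ∈ SL(2,ℤ)` on `ℝ²`. -/
def matAct (A : Matrix.SpecialLinearGroup (Fin 2) ℤ) (v : ℝ × ℝ) : ℝ × ℝ :=
  (((A.1 0 0 : ℤ) : ℝ) * v.1 + ((A.1 0 1 : ℤ) : ℝ) * v.2,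
   ((A.1 1 0 : ℤ) : ℝ) * v.1 + ((A.1 1 1 : ℤ) : ℝ) * v.2)

lemma mem_face (V : Finset (ℝ × ℝ)) (ν : ℝ × ℝ) (c : ℝ)
    (hsupp : ∀ v ∈ V, v.1 * ν.1 + v.2 * ν.2 ≤ c)
    [DecidablePred fun v : ℝ × ℝ => v.1 * ν.1 + v.2 * ν.2 = c]
    (x : ℝ × ℝ) (hx : x ∈ convexHull ℝ (V : Set (ℝ × ℝ)))
    (hxc : x.1 * ν.1 + x.2 * ν.2 = c) :
    x ∈ convexHull ℝ ((V.filter fun v => v.1 * ν.1 + v.2 * ν.2 = c : Finset (ℝ × ℝ)) :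
      Set (ℝ × ℝ)) := by
  obtain ⟨w, hw0, hw1, hwx⟩ := Finset.mem_convexHull.1 hx
  have hxsum : ∑ v ∈ V, w v • v = x := by
    rw [Finset.centerMass_eq_of_sum_1 V id hw1] at hwx; simpa using hwx
  have hx1 : x.1 = ∑ v ∈ V, w v * v.1 := by
    rw [← hxsum, Prod.fst_sum]; simp
  have hx2 : x.2 = ∑ v ∈ V, w v * v.2 := by
    rw [← hxsum, Prod.snd_sum]; simp
  have hsum0 : ∑ v ∈ V, w v * (c - (v.1 * ν.1 + v.2 * ν.2)) = 0 := by
    have : ∑ v ∈ V, w v * (c - (v.1 * ν.1 + v.2 * ν.2))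
        = (∑ v ∈ V, w v) * c - ((∑ v ∈ V, w v * v.1) * ν.1 + (∑ v ∈ V, w v * v.2) * ν.2) := by
      rw [Finset.sum_mul, Finset.sum_mul, Finset.sum_mul, ← Finset.sum_add_distrib,
        ← Finset.sum_sub_distrib]
      exact Finset.sum_congr rfl fun v _ => by ring
    rw [this, hw1, ← hx1, ← hx2, hxc]; ring
  have key : ∀ v ∈ V, w v * (c - (v.1 * ν.1 + v.2 * ν.2)) = 0 := by
    rw [← Finset.sum_eq_zero_iff_of_nonneg] at *
    · exact hsum0
    · intro v hv
      exact mul_nonneg (hw0 v hv) (by linarith [hsupp v hv])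
  have key' : ∀ v ∈ V, ¬(v.1 * ν.1 + v.2 * ν.2 = c) → w v = 0 := by
    intro v hv hvc
    rcases mul_eq_zero.1 (key v hv) with h | h
    · exact h
    · exact absurd (by linarith) hvc
  apply Finset.mem_convexHull.2
  have hz : ∑ v ∈ V.filter (fun v => ¬(v.1 * ν.1 + v.2 * ν.2 = c)), w v = 0 :=
    Finset.sum_eq_zero fun v hv => key' v (Finset.mem_filter.1 hv).1 (Finset.mem_filter.1 hv).2
  have hw1' : ∑ v ∈ V.filter (fun v => v.1 * ν.1 + v.2 * ν.2 = c), w v = 1 := by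
    have h := Finset.sum_filter_add_sum_filter_not V (fun v => v.1 * ν.1 + v.2 * ν.2 = c) w
    rw [hz, add_zero] at h; rw [h, hw1]
  refine ⟨w, fun y hy => hw0 y (Finset.filter_subset _ _ hy), hw1', ?_⟩
  rw [Finset.centerMass_eq_of_sum_1 _ id hw1']
  have hz2 : ∑ v ∈ V.filter (fun v => ¬(v.1 * ν.1 + v.2 * ν.2 = c)), w v • v = 0 :=
    Finset.sum_eq_zero fun v hv => by
      rw [key' v (Finset.mem_filter.1 hv).1 (Finset.mem_filter.1 hv).2, zero_smul]
  have h := Finset.sum_filter_add_sum_filter_not V (fun v => v.1 * ν.1 + v.2 * ν.2 = c)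
    (fun v => w v • v)
  rw [hz2, add_zero] at h
  simp only [id_eq]
  rw [h, hxsum]

lemma exists_lam (a1 b1 : ℤ) (g : ℝ) (hg : 0 < g) (D1 D2 : ℝ)
    (hD : ¬(D1 = 0 ∧ D2 = 0)) (N : ℝ) (hN : 0 < N)
    (ha : (a1 : ℝ) * g = D1 * N) (hb : (b1 : ℝ) * g = D2 * N)
    (ν1 ν2 : ℝ) (hν : ¬(ν1 = 0 ∧ ν2 = 0)) (horth : D1 * ν1 + D2 * ν2 = 0) :
    ∃ lam : ℝ, lam ≠ 0 ∧ -(b1 : ℝ) = lam * ν1 ∧ (a1 : ℝ) = lam * ν2 := by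
  by_cases h1 : ν1 = 0
  · have h2 : ν2 ≠ 0 := fun h => hν ⟨h1, h⟩
    have hD2 : D2 = 0 := by
      have : D2 * ν2 = 0 := by rw [h1] at horth; linarith
      rcases mul_eq_zero.1 this with h | h
      · exact h
      · exact absurd h h2
    have hD1 : D1 ≠ 0 := fun h => hD ⟨h, hD2⟩
    have hb1 : (b1 : ℝ) = 0 := by
      have : (b1 : ℝ) * g = 0 := by rw [hb, hD2]; ring
      rcases mul_eq_zero.1 this with h | h
      · exact h
      · linarith
    have ha1 : (a1 : ℝ) ≠ 0 := by
      intro h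
      rw [h] at ha
      have : D1 * N = 0 := by linarith
      rcases mul_eq_zero.1 this with h' | h'
      · exact hD1 h'
      · linarith
    exact ⟨(a1 : ℝ) / ν2, div_ne_zero ha1 h2, by rw [h1, hb1]; ring, by field_simp⟩
  · have hD2 : D2 ≠ 0 := by
      intro h
      have : D1 * ν1 = 0 := by rw [h] at horth; linarith
      rcases mul_eq_zero.1 this with h' | h'
      · exact hD ⟨h', h⟩
      · exact h1 h'
    have hb1 : (b1 : ℝ) ≠ 0 := by
      intro h
      rw [h] at hb
      have : D2 * N = 0 := by linarith
      rcases mul_eq_zero.1 this with h' | h'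
      · exact hD2 h'
      · linarith
    refine ⟨-(b1 : ℝ) / ν1, div_ne_zero (neg_ne_zero.2 hb1) h1, by field_simp, ?_⟩
    have key : (a1 : ℝ) * ν1 = -(b1 : ℝ) * ν2 := by
      have h3 : (a1 : ℝ) * g * ν1 = -((b1 : ℝ) * g) * ν2 := by
        rw [ha, hb]; nlinarith [horth]
      have hg' : g ≠ 0 := ne_of_gt hg
      field_simp at h3
      nlinarith [h3]
    field_simp
    linarith [key]

theorem side_of_rational_polygon_to_vertical
    (V : Finset (ℝ × ℝ)) (hV : ∀ v ∈ V, ∃ a b : ℚ, v = ((a : ℝ), (b : ℝ)))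
    (ρ : Set (ℝ × ℝ)) (hρ : ρ = convexHull ℝ (V : Set (ℝ × ℝ)))
    (hnd : (interior ρ).Nonempty)
    (S : Set (ℝ × ℝ)) (ν : ℝ × ℝ) (hν : ν ≠ 0) (c : ℝ)
    (hsupp : ρ ⊆ {z : ℝ × ℝ | z.1 * ν.1 + z.2 * ν.2 ≤ c})
    (hS : S = ρ ∩ {z : ℝ × ℝ | z.1 * ν.1 + z.2 * ν.2 = c})
    (hSseg : ∃ x ∈ S, ∃ y ∈ S, x ≠ y) :
    ∃ (A : Matrix.SpecialLinearGroup (Fin 2) ℤ) (m n : ℤ) (p : ℕ), 0 < p ∧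
      (fun z => matAct A ((p : ℝ) • z) + ((m : ℝ), (n : ℝ))) '' ρ
          ⊆ {z : ℝ × ℝ | z.1 ≤ 0} ∧
      ((fun z => matAct A ((p : ℝ) • z) + ((m : ℝ), (n : ℝ))) '' ρ)
          ∩ {z : ℝ × ℝ | z.1 = 0}
        = (fun z => matAct A ((p : ℝ) • z) + ((m : ℝ), (n : ℝ))) '' S := by
  classical
  obtain ⟨x, hxS, y, hyS, hxy⟩ := hSseg
  rw [hS] at hxS hyS
  have hVsupp : ∀ v ∈ V, v.1 * ν.1 + v.2 * ν.2 ≤ c := by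
    intro v hv
    exact hsupp (by rw [hρ]; exact subset_convexHull ℝ _ hv)
  have hxW := mem_face V ν c hVsupp x (hρ ▸ hxS.1) hxS.2
  have hyW := mem_face V ν c hVsupp y (hρ ▸ hyS.1) hyS.2
  set W := V.filter fun v => v.1 * ν.1 + v.2 * ν.2 = c with hWdef
  -- two distinct points of W
  obtain ⟨q1, hq1W, q2, hq2W, hne⟩ :
      ∃ q1 ∈ W, ∃ q2 ∈ W, q1 ≠ q2 := by
    by_contra hcon
    push_neg at hcon
    have hWne : W.Nonempty := by
      rcases W.eq_empty_or_nonempty with h | h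
      · rw [h] at hxW; simp at hxW
      · exact h
    obtain ⟨w0, hw0⟩ := hWne
    have hsub : (W : Set (ℝ × ℝ)) ⊆ {w0} := by
      intro q hq
      simp only [Set.mem_singleton_iff]
      exact hcon q hq w0 hw0
    have hhull : convexHull ℝ (W : Set (ℝ × ℝ)) ⊆ convexHull ℝ {w0} := convexHull_mono hsub
    rw [convexHull_singleton] at hhull
    exact hxy ((hhull hxW).trans (hhull hyW).symm)
  obtain ⟨e1, e2, hq1⟩ := hV q1 (Finset.filter_subset _ _ hq1W)
  obtain ⟨f1, f2, hq2⟩ := hV q2 (Finset.filter_subset _ _ hq2W)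
  have hq1line : (e1 : ℝ) * ν.1 + (e2 : ℝ) * ν.2 = c := by
    have := (Finset.mem_filter.1 hq1W).2
    rw [hq1] at this; exact this
  have hq2line : (f1 : ℝ) * ν.1 + (f2 : ℝ) * ν.2 = c := by
    have := (Finset.mem_filter.1 hq2W).2
    rw [hq2] at this; exact this
  set r1 : ℚ := f1 - e1 with hr1
  set r2 : ℚ := f2 - e2 with hr2
  have hr : ¬(r1 = 0 ∧ r2 = 0) := by
    rintro ⟨h1, h2⟩
    apply hne
    rw [hq1, hq2]
    have hf1 : f1 = e1 := by rw [hr1] at h1; linarith [h1]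
    have hf2 : f2 = e2 := by rw [hr2] at h2; linarith [h2]
    rw [hf1, hf2]
  have horth : (r1 : ℝ) * ν.1 + (r2 : ℝ) * ν.2 = 0 := by
    push_cast [hr1, hr2]
    nlinarith [hq1line, hq2line]
  -- integer direction vector
  set a0 : ℤ := r1.num * r2.den with ha0def
  set b0 : ℤ := r2.num * r1.den with hb0def
  have hden1 : ((r1.den : ℚ)) ≠ 0 := Nat.cast_ne_zero.2 r1.den_ne_zero
  have hden2 : ((r2.den : ℚ)) ≠ 0 := Nat.cast_ne_zero.2 r2.den_ne_zero
  have hnum1 : (r1.num : ℚ) = r1 * r1.den := ((div_eq_iff hden1).1 (Rat.num_div_den r1))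
  have hnum2 : (r2.num : ℚ) = r2 * r2.den := ((div_eq_iff hden2).1 (Rat.num_div_den r2))
  set NR : ℝ := (r1.den : ℝ) * (r2.den : ℝ) with hNR
  have hNpos : 0 < NR := by
    rw [hNR]
    exact mul_pos (by exact_mod_cast r1.den_pos) (by exact_mod_cast r2.den_pos)
  have ha0 : (a0 : ℝ) = (r1 : ℝ) * NR := by
    have : (a0 : ℚ) = r1 * (r1.den * r2.den) := by
      rw [ha0def]; push_cast [hnum1]; ring
    rw [hNR]
    exact_mod_cast this
  have hb0 : (b0 : ℝ) = (r2 : ℝ) * NR := by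
    have : (b0 : ℚ) = r2 * (r1.den * r2.den) := by
      rw [hb0def]; push_cast [hnum2]; ring
    rw [hNR]
    exact_mod_cast this
  have ha0b0 : a0 ≠ 0 ∨ b0 ≠ 0 := by
    rcases not_and_or.1 hr with h | h
    · left
      rw [ha0def]
      exact mul_ne_zero (Rat.num_ne_zero.2 h) (Int.natCast_ne_zero.2 r2.den_ne_zero)
    · right
      rw [hb0def]
      exact mul_ne_zero (Rat.num_ne_zero.2 h) (Int.natCast_ne_zero.2 r1.den_ne_zero)
  have hgpos : 0 < Int.gcd a0 b0 := Int.gcd_pos_iff.2 ha0b0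
  set g : ℤ := (Int.gcd a0 b0 : ℤ) with hgdef
  have hgposR : (0 : ℝ) < (g : ℝ) := by
    rw [hgdef]; exact_mod_cast hgpos
  set a1 : ℤ := a0 / g with ha1def
  set b1 : ℤ := b0 / g with hb1def
  have hgcd1 : Int.gcd a1 b1 = 1 := Int.gcd_div_gcd_div_gcd hgpos
  have ha1g : a1 * g = a0 := Int.ediv_mul_cancel (Int.gcd_dvd_left a0 b0)
  have hb1g : b1 * g = b0 := Int.ediv_mul_cancel (Int.gcd_dvd_right a0 b0)
  have ha1R : (a1 : ℝ) * (g : ℝ) = (r1 : ℝ) * NR := by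
    rw [← ha0]; exact_mod_cast congrArg (Int.cast : ℤ → ℝ) ha1g
  have hb1R : (b1 : ℝ) * (g : ℝ) = (r2 : ℝ) * NR := by
    rw [← hb0]; exact_mod_cast congrArg (Int.cast : ℤ → ℝ) hb1g
  have hrR : ¬((r1 : ℝ) = 0 ∧ (r2 : ℝ) = 0) := by
    rintro ⟨h1, h2⟩
    exact hr ⟨by exact_mod_cast h1, by exact_mod_cast h2⟩
  have hνR : ¬(ν.1 = 0 ∧ ν.2 = 0) := by
    rintro ⟨h1, h2⟩
    exact hν (Prod.ext h1 h2)
  obtain ⟨lam0, hlam0, hb1ν, ha1ν⟩ :=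
    exists_lam a1 b1 (g : ℝ) hgposR (r1 : ℝ) (r2 : ℝ) hrR NR hNpos ha1R hb1R ν.1 ν.2 hνR horth
  -- make lam positive
  obtain ⟨a, b, hab, lam, hlam, hbν, haν⟩ :
      ∃ a b : ℤ, Int.gcd a b = 1 ∧ ∃ lam : ℝ, 0 < lam ∧
        -(b : ℝ) = lam * ν.1 ∧ (a : ℝ) = lam * ν.2 := by
    rcases hlam0.lt_or_gt with hneg | hpos
    · refine ⟨-a1, -b1, by simp [Int.neg_gcd, Int.gcd_neg, hgcd1], -lam0, by linarith, ?_, ?_⟩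
      · push_cast; linarith
      · push_cast; linarith
    · exact ⟨a1, b1, hgcd1, lam0, hpos, hb1ν, ha1ν⟩
  -- Bezout
  have hbz : (1 : ℤ) = a * Int.gcdA a b + b * Int.gcdB a b := by
    have h := Int.gcd_eq_gcd_ab a b
    rw [hab] at h
    exact_mod_cast h
  set s : ℤ := Int.gcdA a b with hsdef
  set t : ℤ := Int.gcdB a b with htdef
  set A : Matrix.SpecialLinearGroup (Fin 2) ℤ :=
    ⟨!![-b, a; -s, -t], by rw [Matrix.det_fin_two_of]; linarith⟩ with hAdef
  set c' : ℚ := -(b : ℚ) * e1 + (a : ℚ) * e2 with hc'def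
  have hnumc' : (c'.num : ℝ) = (c' : ℝ) * (c'.den : ℝ) := by
    have hd : ((c'.den : ℚ)) ≠ 0 := Nat.cast_ne_zero.2 c'.den_ne_zero
    have h := (div_eq_iff hd).1 (Rat.num_div_den c')
    exact_mod_cast h
  have hc'R : (c' : ℝ) = lam * c := by
    rw [hc'def]
    push_cast
    linear_combination (e1 : ℝ) * hbν + (e2 : ℝ) * haν + lam * hq1line
  have hm : (c'.num : ℝ) = (c'.den : ℝ) * lam * c := by
    rw [hnumc', hc'R]; ring
  have hppos : (0 : ℝ) < (c'.den : ℝ) := by exact_mod_cast c'.den_pos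
  have keyF : ∀ z : ℝ × ℝ,
      (matAct A ((c'.den : ℝ) • z) + (((-c'.num : ℤ) : ℝ), ((0 : ℤ) : ℝ))).1
        = (c'.den : ℝ) * lam * ((z.1 * ν.1 + z.2 * ν.2) - c) := by
    intro z
    have hA00 : (!![-b, a; -s, -t] : Matrix (Fin 2) (Fin 2) ℤ) 0 0 = -b := by simp
    have hA01 : (!![-b, a; -s, -t] : Matrix (Fin 2) (Fin 2) ℤ) 0 1 = a := by simp
    have hA00' : A.1 0 0 = -b := hA00
    have hA01' : A.1 0 1 = a := hA01
    simp only [matAct, hA00', hA01', hA00, hA01, Prod.fst_add, Prod.smul_fst, Prod.smul_snd, smul_eq_mul]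
    push_cast
    linear_combination ((c'.den : ℝ) * z.1) * hbν + ((c'.den : ℝ) * z.2) * haν - hm
  refine ⟨A, -c'.num, 0, c'.den, c'.den_pos, ?_, ?_⟩
  · rintro _ ⟨z, hz, rfl⟩
    simp only [Set.mem_setOf_eq]
    rw [keyF z]
    have hzc : z.1 * ν.1 + z.2 * ν.2 ≤ c := hsupp hz
    have hnn := mul_nonneg (mul_pos hppos hlam).le
      (show (0 : ℝ) ≤ c - (z.1 * ν.1 + z.2 * ν.2) by linarith)
    nlinarith [hnn]
  · ext w
    simp only [Set.mem_inter_iff, Set.mem_image, Set.mem_setOf_eq]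
    constructor
    · rintro ⟨⟨z, hzρ, rfl⟩, h0⟩
      rw [keyF z] at h0
      have hplam : (0 : ℝ) < (c'.den : ℝ) * lam := mul_pos hppos hlam
      have hzc : z.1 * ν.1 + z.2 * ν.2 = c := by
        rcases mul_eq_zero.1 h0 with h | h
        · exact absurd h (ne_of_gt hplam)
        · linarith
      exact ⟨z, by rw [hS]; exact ⟨hzρ, hzc⟩, rfl⟩
    · rintro ⟨z, hzS, rfl⟩
      rw [hS] at hzS
      refine ⟨⟨z, hzS.1, rfl⟩, ?_⟩
      rw [keyF z, hzS.2]
      ring
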